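/- Let H be a k-uniform hypergraph (k odd) on n vertices with n·d edges and minimum degree at least d/(10k), in which every pair of vertices has codegree at most m(2) < d/(100k³), and for each vertex v fix a set E_v of exactly d/(10k) edges containing v. Then the number of flower gadgets (C, P₁,...,P_k) with each P_i ∈ E_{v_i} is at least (n·d/(2k))·∏_{i=1}^{k}(d/(10k) − i·k·m(2)), which is at least n·d^{k+1}/(20k)^k. -/

import Mathlib

open Finset

lemma greedy_count {α : Type*} [DecidableEq α] [Fintype α] {k : ℕ}
    (valid : Fin k → (Fin k → α) → Finset α)
    (hval : ∀ (i : Fin k) (P P' : Fin k → α), (∀ i' : Fin k, i' < i → P i' = P' i') →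
      valid i P = valid i P')
    (B : Fin k → ℕ)
    (hB : ∀ (i : Fin k) (P : Fin k → α), (∀ i' : Fin k, i' < i → P i' ∈ valid i' P) →
      B i ≤ (valid i P).card)
    (d₀ : α) :
    ∏ i, B i ≤ (univ.filter (fun P : Fin k → α => ∀ i, P i ∈ valid i P)).card := by
  classical
  set S : ℕ → Finset (Fin k → α) := fun j =>
    univ.filter (fun P => (∀ i : Fin k, (i : ℕ) < j → P i ∈ valid i P) ∧
      (∀ i : Fin k, j ≤ (i : ℕ) → P i = d₀)) with hS
  have key : ∀ j ≤ k, ∏ i ∈ univ.filter (fun i : Fin k => (i : ℕ) < j), B i ≤ (S j).card := by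
    intro j hj
    induction j with
    | zero =>
        have h0 : (fun _ : Fin k => d₀) ∈ S 0 := by
          simp [hS]
        have : 0 < (S 0).card := card_pos.2 ⟨_, h0⟩
        simpa using this
    | succ j ih =>
        have hjk : j < k := hj
        have ihc := ih (le_of_lt hjk)
        set jj : Fin k := ⟨j, hjk⟩ with hjj
        -- the biUnion
        have hsub : (S j).biUnion (fun P => (valid jj P).image (fun a => Function.update P jj a))
            ⊆ S (j + 1) := by
          intro Q hQ
          simp only [mem_biUnion, mem_image] at hQ
          obtain ⟨P, hP, a, ha, rfl⟩ := hQ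
          simp only [hS, mem_filter, mem_univ, true_and] at hP ⊢
          obtain ⟨hP1, hP2⟩ := hP
          have hpre : ∀ i' : Fin k, i' < jj → Function.update P jj a i' = P i' := by
            intro i' hi'
            exact Function.update_of_ne (ne_of_lt hi') _ _
          constructor
          · intro i hi
            rcases lt_or_eq_of_le (Nat.lt_succ_iff.1 hi) with h | h
            · have hne : i ≠ jj := by
                intro e
                have : (i : ℕ) = j := by rw [e]
                omega
              rw [Function.update_of_ne hne]
              have heq : valid i (Function.update P jj a) = valid i P := by
                apply hval
                intro i' hi'
                apply Function.update_of_ne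
                intro e
                have : (i' : ℕ) = j := by rw [e]
                have := hi'.trans_le (le_refl i) |>.le
                omega
              rw [heq]
              exact hP1 i h
            · have hieq : i = jj := Fin.ext h
              rw [hieq, Function.update_self]
              have heq : valid jj (Function.update P jj a) = valid jj P := by
                apply hval
                intro i' hi'
                exact Function.update_of_ne (ne_of_lt hi') _ _
              rw [heq]
              exact ha
          · intro i hi
            have hne : i ≠ jj := by
              intro e
              have : (i : ℕ) = j := by rw [e]
              omega
            rw [Function.update_of_ne hne]
            exact hP2 i (by omega)
        -- disjointness of images
        have hdisj : ∀ P ∈ S j, ∀ P' ∈ S j, P ≠ P' →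
            Disjoint ((valid jj P).image (fun a => Function.update P jj a))
              ((valid jj P').image (fun a => Function.update P' jj a)) := by
          intro P hP P' hP' hne
          rw [disjoint_left]
          intro Q hQ hQ'
          simp only [mem_image] at hQ hQ'
          obtain ⟨a, _, rfl⟩ := hQ
          obtain ⟨a', _, he⟩ := hQ'
          apply hne
          simp only [hS, mem_filter] at hP hP'
          have h1 : P jj = d₀ := hP.2.2 jj (le_refl _)
          have h2 : P' jj = d₀ := hP'.2.2 jj (le_refl _)
          funext x
          by_cases hx : x = jj
          · rw [hx, h1, h2]
          · have e1 := congrFun he x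
            rw [Function.update_of_ne hx, Function.update_of_ne hx] at e1
            exact e1.symm
        have hcard1 : (S j).card * B jj ≤ (S (j+1)).card := by
          calc (S j).card * B jj = ∑ _P ∈ S j, B jj := by rw [sum_const, smul_eq_mul]
            _ ≤ ∑ P ∈ S j, ((valid jj P).image (fun a => Function.update P jj a)).card := by
                apply sum_le_sum
                intro P hP
                have hPg : ∀ i' : Fin k, i' < jj → P i' ∈ valid i' P := by
                  intro i' hi'
                  simp only [hS, mem_filter] at hP
                  exact hP.2.1 i' hi'
                rw [card_image_of_injective _ ?_]
                · exact hB jj P hPg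
                · intro a b hab
                  have := congrFun hab jj
                  simpa using this
            _ = ((S j).biUnion (fun P => (valid jj P).image (fun a => Function.update P jj a))).card := by
                rw [card_biUnion hdisj]
            _ ≤ (S (j+1)).card := card_le_card hsub
        have hfilt : univ.filter (fun i : Fin k => (i : ℕ) < j + 1) =
            insert jj (univ.filter (fun i : Fin k => (i : ℕ) < j)) := by
          ext x
          simp only [mem_insert, mem_filter, mem_univ, true_and]
          constructor
          · intro hx
            rcases Nat.lt_succ_iff_lt_or_eq.1 hx with h | h
            · exact Or.inr h
            · exact Or.inl (Fin.ext h)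
          · rintro (rfl | h)
            · exact Nat.lt_succ_self _
            · omega
        rw [hfilt, prod_insert (by simp; exact le_refl j)]
        calc B jj * ∏ i ∈ univ.filter (fun i : Fin k => (i : ℕ) < j), B i
            ≤ B jj * (S j).card := Nat.mul_le_mul_left _ ihc
          _ = (S j).card * B jj := Nat.mul_comm _ _
          _ ≤ (S (j+1)).card := hcard1
  have hk := key k (le_refl k)
  have h1 : univ.filter (fun i : Fin k => (i : ℕ) < k) = univ := by
    ext x; simp [x.isLt]
  rw [h1] at hk
  refine hk.trans (card_le_card ?_)
  intro P hP
  simp only [hS, mem_filter, mem_univ, true_and] at hP ⊢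
  exact fun i => hP.1 i i.isLt

lemma pow95 : ∀ k : ℕ, 5 ≤ k → 2 * (k : ℝ) ≤ (9/5) ^ k := by
  intro k hk
  induction k with
  | zero => omega
  | succ m ih =>
    rcases Nat.lt_or_ge m 5 with h | h
    · have hm4 : m = 4 := by omega
      subst hm4
      norm_num
    · have hm := ih h
      have h5 : (5 : ℝ) ≤ m := by exact_mod_cast h
      push_cast
      calc 2 * ((m : ℝ) + 1) ≤ (9/5) * (2 * m) := by nlinarith
        _ ≤ (9/5) * (9/5)^m := by nlinarith [pow_nonneg (by norm_num : (0:ℝ) ≤ 9/5) m]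
        _ = (9/5)^(m+1) := by ring

lemma prod_t_ge (k : ℕ) (hk3 : 3 ≤ k) (hk : Odd k) :
    2 * (k : ℝ) ≤ ∏ i ∈ range k, (2 - ((i : ℝ) + 1) / (5 * k)) := by
  rcases Nat.lt_or_ge k 5 with h | h
  · have hk3' : k = 3 ∨ k = 4 := by omega
    have : k = 3 := by
      rcases hk3' with h | h
      · exact h
      · exfalso; rw [h, Nat.odd_iff] at hk; omega
    subst this
    norm_num [prod_range_succ]
  · calc 2 * (k : ℝ) ≤ (9/5) ^ k := pow95 k h
      _ = ∏ _i ∈ range k, ((9:ℝ)/5) := by rw [prod_const, card_range]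
      _ ≤ ∏ i ∈ range k, (2 - ((i : ℝ) + 1) / (5 * k)) := by
          apply prod_le_prod
          · intro i _; norm_num
          · intro i hi
            have hik : (i : ℝ) + 1 ≤ k := by
              have := mem_range.1 hi; exact_mod_cast Nat.succ_le_of_lt this
            have hk0 : (0 : ℝ) < k := by positivity
            have h1 : ((i : ℝ) + 1) / (5 * k) ≤ 1/5 := by
              rw [div_le_iff₀ (by positivity)]; nlinarith
            linarith

lemma second_ineq (n k d m2 : ℕ) (hk : Odd k) (hk3 : 3 ≤ k)
    (hm2 : (m2 : ℝ) < (d : ℝ) / (100 * k ^ 3)) :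
    ((n : ℝ) * d / (2 * k)) *
        ∏ i ∈ Finset.range k, ((d : ℝ) / (10 * k) - (i + 1) * k * m2) ≥
      (n : ℝ) * (d : ℝ) ^ (k + 1) / (20 * k) ^ k := by
  have hk0 : (0 : ℝ) < k := by positivity
  have hd0 : (0 : ℝ) ≤ d := by positivity
  have key : ∀ i ∈ range k,
      (d : ℝ) / (20 * k) * (2 - ((i : ℝ) + 1) / (5 * k)) ≤
        (d : ℝ) / (10 * k) - ((i : ℝ) + 1) * k * m2 ∧
      (0 : ℝ) ≤ (d : ℝ) / (20 * k) * (2 - ((i : ℝ) + 1) / (5 * k)) := by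
    intro i hi
    have hik : (i : ℝ) + 1 ≤ k := by
      have := mem_range.1 hi; exact_mod_cast Nat.succ_le_of_lt this
    have hm2' : ((i : ℝ) + 1) * k * m2 ≤ ((i : ℝ) + 1) * k * ((d:ℝ) / (100 * k^3)) := by
      apply mul_le_mul_of_nonneg_left hm2.le (by positivity)
    constructor
    · have : (d : ℝ) / (20 * k) * (2 - ((i : ℝ) + 1) / (5 * k)) =
          (d : ℝ) / (10 * k) - ((i : ℝ) + 1) * k * ((d:ℝ) / (100 * k^3)) := by
        field_simp
        ring
      rw [this]
      linarith
    · have h1 : ((i : ℝ) + 1) / (5 * k) ≤ 1/5 := by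
        rw [div_le_iff₀ (by positivity)]; nlinarith
      have : (0:ℝ) ≤ 2 - ((i : ℝ) + 1) / (5 * k) := by linarith
      positivity
  have hprod : ∏ i ∈ range k, ((d : ℝ) / (20 * k) * (2 - ((i : ℝ) + 1) / (5 * k))) ≤
      ∏ i ∈ range k, ((d : ℝ) / (10 * k) - ((i : ℝ) + 1) * k * m2) :=
    prod_le_prod (fun i hi => (key i hi).2) (fun i hi => (key i hi).1)
  have hsplit : ∏ i ∈ range k, ((d : ℝ) / (20 * k) * (2 - ((i : ℝ) + 1) / (5 * k))) =
      ((d : ℝ) / (20 * k)) ^ k * ∏ i ∈ range k, (2 - ((i : ℝ) + 1) / (5 * k)) := by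
    rw [prod_mul_distrib, prod_const, card_range]
  have hT := prod_t_ge k hk3 hk
  have hpow : (0:ℝ) ≤ ((d : ℝ) / (20 * k)) ^ k := by positivity
  have hfinal : ((d : ℝ) / (20 * k)) ^ k * (2 * k) ≤
      ∏ i ∈ range k, ((d : ℝ) / (10 * k) - ((i : ℝ) + 1) * k * m2) := by
    calc ((d : ℝ) / (20 * k)) ^ k * (2 * k)
        ≤ ((d : ℝ) / (20 * k)) ^ k * ∏ i ∈ range k, (2 - ((i : ℝ) + 1) / (5 * k)) :=
          mul_le_mul_of_nonneg_left hT hpow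
      _ = _ := hsplit.symm
      _ ≤ _ := hprod
  have hn0 : (0:ℝ) ≤ n := by positivity
  have hmul := mul_le_mul_of_nonneg_left hfinal (by positivity : (0:ℝ) ≤ (n : ℝ) * d / (2 * k))
  refine le_trans (le_of_eq ?_) hmul
  rw [div_pow]
  field_simp
  ring

lemma first_ineq (n k d m2 : ℕ) (hk3 : 3 ≤ k) (hdvd : 10 * k ∣ d) (hn : 0 < n)
    (H : Finset (Finset (Fin n))) (hunif : ∀ E ∈ H, E.card = k)
    (hcard : H.card = n * d)
    (hcodeg : ∀ u w : Fin n, u ≠ w →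
      (H.filter (fun E => u ∈ E ∧ w ∈ E)).card ≤ m2)
    (hm2 : (m2 : ℝ) < (d : ℝ) / (100 * k ^ 3))
    (ℰ : Fin n → Finset (Finset (Fin n)))
    (hℰ : ∀ v : Fin n, ℰ v ⊆ H.filter (fun E => v ∈ E))
    (hℰcard : ∀ v : Fin n, (ℰ v).card = d / (10 * k)) :
    ((n : ℝ) * d / (2 * k)) *
        ∏ i ∈ Finset.range k, ((d : ℝ) / (10 * k) - (i + 1) * k * m2) ≤
    (Nat.card {g : Finset (Fin n) × (Fin k → Fin n) × (Fin k → Finset (Fin n)) //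
        g.1 ∈ H ∧ Function.Injective g.2.1 ∧
        g.1 = Finset.image g.2.1 Finset.univ ∧
        (∀ i, g.2.2 i ∈ ℰ (g.2.1 i)) ∧
        (∀ i j, i ≠ j → Disjoint (g.2.2 i) (g.2.2 j)) ∧
        (∀ i, g.2.2 i ∩ g.1 = {g.2.1 i})} : ℝ) := by
  classical
  have hk0 : 0 < k := by omega
  set D := d / (10 * k) with hDdef
  have hD : (D : ℝ) = (d : ℝ) / (10 * (k : ℝ)) := by
    rw [hDdef, Nat.cast_div hdvd (by positivity)]
    push_cast; ring
  -- vertex labelling of each edge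
  set vC : Finset (Fin n) → (Fin k → Fin n) := fun C =>
    if h : C.card = k then (fun i => (C.orderIsoOfFin h i : Fin n)) else fun _ => ⟨0, hn⟩
    with hvC
  have hvCinj : ∀ C ∈ H, Function.Injective (vC C) := by
    intro C hC
    have hCk := hunif C hC
    intro a b hab
    rw [hvC] at hab
    simp only [dif_pos hCk] at hab
    exact (C.orderIsoOfFin hCk).injective (Subtype.val_injective hab)
  have hvCim : ∀ C ∈ H, C = Finset.image (vC C) univ := by
    intro C hC
    have hCk := hunif C hC
    ext x
    simp only [hvC, dif_pos hCk, mem_image, mem_univ, true_and]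
    constructor
    · intro hx
      exact ⟨(C.orderIsoOfFin hCk).symm ⟨x, hx⟩, by simp⟩
    · rintro ⟨i, rfl⟩
      exact (C.orderIsoOfFin hCk i).2
  have hvCmem : ∀ C ∈ H, ∀ i : Fin k, vC C i ∈ C := by
    intro C hC i
    have h := mem_image_of_mem (vC C) (mem_univ i)
    rwa [← hvCim C hC] at h
  -- the valid sets
  set valid : Finset (Fin n) → Fin k → (Fin k → Finset (Fin n)) → Finset (Finset (Fin n)) :=
    fun C i P => (ℰ (vC C i)).filter
      (fun a => a ∩ C = {vC C i} ∧ ∀ i' : Fin k, i' < i → Disjoint (P i') a)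
    with hvalid
  set B : Fin k → ℕ := fun i => D - ((i : ℕ) + 1) * k * m2 with hB
  -- the greedy step bound
  have hstep : ∀ C ∈ H, ∀ (i : Fin k) (P : Fin k → Finset (Fin n)),
      (∀ i' : Fin k, i' < i → P i' ∈ valid C i' P) → B i ≤ (valid C i P).card := by
    intro C hC i P hP
    have hCk := hunif C hC
    set F : Finset (Fin n) :=
      (C.erase (vC C i)) ∪ (Finset.Iio i).biUnion (fun i' => P i') with hF
    -- v i is not in F
    have hviF : vC C i ∉ F := by
      rw [hF]
      simp only [mem_union, mem_biUnion, Finset.mem_Iio, not_or]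
      constructor
      · exact notMem_erase _ _
      · rintro ⟨i', hi', hmem⟩
        have h1 := hP i' hi'
        rw [hvalid] at h1
        simp only [mem_filter] at h1
        have h2 : vC C i ∈ P i' ∩ C := mem_inter.2 ⟨hmem, hvCmem C hC i⟩
        rw [h1.2.1] at h2
        have : vC C i = vC C i' := by simpa using h2
        have : i = i' := hvCinj C hC this
        omega
    -- bound on |F|
    have hFcard : F.card ≤ (k - 1) + (i : ℕ) * k := by
      refine (card_union_le _ _).trans ?_
      have h1 : (C.erase (vC C i)).card = k - 1 := by
        rw [card_erase_of_mem (hvCmem C hC i), hCk]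
      have h2 : ((Finset.Iio i).biUnion (fun i' => P i')).card ≤ (i : ℕ) * k := by
        refine (card_biUnion_le).trans ?_
        have : ∀ i' ∈ Finset.Iio i, (P i').card = k := by
          intro i' hi'
          have h1 := hP i' (Finset.mem_Iio.1 hi')
          rw [hvalid] at h1
          simp only [mem_filter] at h1
          have := hℰ (vC C i') h1.1
          exact hunif _ (mem_filter.1 this).1
        refine le_of_eq ?_
        calc ∑ i' ∈ Finset.Iio i, (P i').card = ∑ _i' ∈ Finset.Iio i, k :=
              Finset.sum_congr rfl this
          _ = (Finset.Iio i).card * k := by rw [sum_const, smul_eq_mul]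
          _ = (i : ℕ) * k := by rw [Fin.card_Iio]
      omega
    -- the bad edges are covered by codegree sets
    have hbadsub : (ℰ (vC C i)).filter
        (fun a => ¬(a ∩ C = {vC C i} ∧ ∀ i' : Fin k, i' < i → Disjoint (P i') a)) ⊆
        F.biUnion (fun u => (ℰ (vC C i)).filter (fun a => u ∈ a)) := by
      intro a ha
      simp only [mem_filter, not_and, not_forall] at ha
      obtain ⟨haE, hbad⟩ := ha
      have hva : vC C i ∈ a := (mem_filter.1 (hℰ _ haE)).2
      by_cases hint : a ∩ C = {vC C i}
      · obtain ⟨i', hi', hnd⟩ := hbad hint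
        rw [Finset.not_disjoint_iff] at hnd
        obtain ⟨u, hu1, hu2⟩ := hnd
        refine mem_biUnion.2 ⟨u, ?_, mem_filter.2 ⟨haE, hu2⟩⟩
        rw [hF]
        exact mem_union_right _ (mem_biUnion.2 ⟨i', Finset.mem_Iio.2 hi', hu1⟩)
      · have hsub : {vC C i} ⊆ a ∩ C :=
          singleton_subset_iff.2 (mem_inter.2 ⟨hva, hvCmem C hC i⟩)
        obtain ⟨u, hu1, hu2⟩ := exists_of_ssubset (lt_of_le_of_ne hsub (Ne.symm hint))
        have huC : u ∈ C := (mem_inter.1 hu1).2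
        have hune : u ≠ vC C i := by simpa using hu2
        refine mem_biUnion.2 ⟨u, ?_, mem_filter.2 ⟨haE, (mem_inter.1 hu1).1⟩⟩
        rw [hF]
        exact mem_union_left _ (mem_erase.2 ⟨hune, huC⟩)
    have hbadcard : (F.biUnion (fun u => (ℰ (vC C i)).filter (fun a => u ∈ a))).card ≤
        F.card * m2 := by
      refine card_biUnion_le.trans ?_
      have : ∀ u ∈ F, ((ℰ (vC C i)).filter (fun a => u ∈ a)).card ≤ m2 := by
        intro u hu
        have hne : vC C i ≠ u := by
          intro e; rw [e] at hviF; exact hviF hu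
        refine le_trans (card_le_card ?_) (hcodeg (vC C i) u hne)
        intro a ha
        simp only [mem_filter] at ha ⊢
        have := mem_filter.1 (hℰ _ ha.1)
        exact ⟨this.1, this.2, ha.2⟩
      calc ∑ u ∈ F, ((ℰ (vC C i)).filter (fun a => u ∈ a)).card ≤ ∑ _u ∈ F, m2 :=
            Finset.sum_le_sum this
        _ = F.card * m2 := by rw [sum_const, smul_eq_mul]
    -- split
    have hsplit := Finset.card_filter_add_card_filter_not
      (s := ℰ (vC C i))
      (p := fun a => a ∩ C = {vC C i} ∧ ∀ i' : Fin k, i' < i → Disjoint (P i') a)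
    rw [hℰcard] at hsplit
    have hbc : ((ℰ (vC C i)).filter
        (fun a => ¬(a ∩ C = {vC C i} ∧ ∀ i' : Fin k, i' < i → Disjoint (P i') a))).card ≤
        ((i : ℕ) + 1) * k * m2 := by
      refine le_trans (card_le_card hbadsub) (hbadcard.trans ?_)
      have h1 : F.card ≤ ((i : ℕ) + 1) * k := by
        have : (k - 1) + (i : ℕ) * k ≤ ((i : ℕ) + 1) * k := by
          have : ((i : ℕ) + 1) * k = (i : ℕ) * k + k := by ring
          omega
        omega
      exact Nat.mul_le_mul_right m2 h1
    rw [hvalid, hB]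
    simp only
    omega
  -- greedy count within each edge
  have hgreedy : ∀ C ∈ H, ∏ i, B i ≤
      (univ.filter (fun P : Fin k → Finset (Fin n) => ∀ i, P i ∈ valid C i P)).card := by
    intro C hC
    refine greedy_count (valid C) ?_ B (fun i P h => hstep C hC i P h) ∅
    intro i P P' hpre
    rw [hvalid]
    simp only
    apply filter_congr
    intro a _
    constructor
    · rintro ⟨h1, h2⟩
      exact ⟨h1, fun i' hi' => by rw [← hpre i' hi']; exact h2 i' hi'⟩
    · rintro ⟨h1, h2⟩
      exact ⟨h1, fun i' hi' => by rw [hpre i' hi']; exact h2 i' hi'⟩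
  -- assemble gadgets
  set pred : Finset (Fin n) × (Fin k → Fin n) × (Fin k → Finset (Fin n)) → Prop :=
    fun g => g.1 ∈ H ∧ Function.Injective g.2.1 ∧
        g.1 = Finset.image g.2.1 Finset.univ ∧
        (∀ i, g.2.2 i ∈ ℰ (g.2.1 i)) ∧
        (∀ i j, i ≠ j → Disjoint (g.2.2 i) (g.2.2 j)) ∧
        (∀ i, g.2.2 i ∩ g.1 = {g.2.1 i}) with hpred
  have hsub : H.biUnion (fun C =>
      (univ.filter (fun P : Fin k → Finset (Fin n) => ∀ i, P i ∈ valid C i P)).image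
        (fun P => (C, vC C, P))) ⊆ univ.filter pred := by
    intro g hg
    simp only [mem_biUnion, mem_image, mem_filter, mem_univ, true_and] at hg
    obtain ⟨C, hC, P, hP, rfl⟩ := hg
    have hPv : ∀ i : Fin k, P i ∈ ℰ (vC C i) ∧ P i ∩ C = {vC C i} ∧
        ∀ i' : Fin k, i' < i → Disjoint (P i') (P i) := by
      intro i
      have := hP i
      rw [hvalid] at this
      simp only [mem_filter] at this
      exact ⟨this.1, this.2.1, this.2.2⟩
    simp only [mem_filter, mem_univ, true_and, hpred]
    refine ⟨hC, hvCinj C hC, hvCim C hC, fun i => (hPv i).1, ?_, fun i => (hPv i).2.1⟩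
    intro i j hij
    rcases lt_or_gt_of_ne hij with h | h
    · exact (hPv j).2.2 i h
    · exact ((hPv i).2.2 j h).symm
  have hdisjU : ∀ C₁ ∈ H, ∀ C₂ ∈ H, C₁ ≠ C₂ →
      Disjoint ((univ.filter (fun P : Fin k → Finset (Fin n) =>
          ∀ i, P i ∈ valid C₁ i P)).image (fun P => (C₁, vC C₁, P)))
        ((univ.filter (fun P : Fin k → Finset (Fin n) =>
          ∀ i, P i ∈ valid C₂ i P)).image (fun P => (C₂, vC C₂, P))) := by
    intro C₁ _ C₂ _ hne
    rw [disjoint_left]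
    intro g hg1 hg2
    simp only [mem_image] at hg1 hg2
    obtain ⟨P, _, rfl⟩ := hg1
    obtain ⟨P', _, he⟩ := hg2
    exact hne (congrArg Prod.fst he).symm
  have hcount : n * d * ∏ i, B i ≤ (univ.filter pred).card := by
    calc n * d * ∏ i, B i = ∑ _C ∈ H, ∏ i, B i := by
          rw [sum_const, smul_eq_mul, hcard]
      _ ≤ ∑ C ∈ H, (univ.filter
            (fun P : Fin k → Finset (Fin n) => ∀ i, P i ∈ valid C i P)).card :=
          Finset.sum_le_sum hgreedy
      _ = ∑ C ∈ H, ((univ.filter (fun P : Fin k → Finset (Fin n) =>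
            ∀ i, P i ∈ valid C i P)).image (fun P => (C, vC C, P))).card := by
          refine Finset.sum_congr rfl fun C _ => ?_
          rw [card_image_of_injective]
          intro P P' hPP'
          have := congrArg (fun g => g.2.2) hPP'
          exact this
      _ = (H.biUnion (fun C => (univ.filter (fun P : Fin k → Finset (Fin n) =>
            ∀ i, P i ∈ valid C i P)).image (fun P => (C, vC C, P)))).card :=
          (card_biUnion hdisjU).symm
      _ ≤ (univ.filter pred).card := card_le_card hsub
  -- now pass to the reals
  have hreal : ((n * d * ∏ i, B i : ℕ) : ℝ) ≥
      ((n : ℝ) * d / (2 * k)) * ∏ i ∈ Finset.range k, ((d : ℝ) / (10 * k) - (i + 1) * k * m2) := by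
    push_cast
    have hd0 : (0:ℝ) ≤ d := by positivity
    have hkR : (3:ℝ) ≤ k := by exact_mod_cast hk3
    have hfB : ∀ i : Fin k,
        (0:ℝ) ≤ (d : ℝ) / (10 * k) - (((i:ℕ):ℝ) + 1) * k * m2 ∧
        (d : ℝ) / (10 * k) - (((i:ℕ):ℝ) + 1) * k * m2 ≤ ((B i : ℕ) : ℝ) := by
      intro i
      have hik : ((i:ℕ):ℝ) + 1 ≤ k := by
        have := i.isLt; exact_mod_cast Nat.succ_le_of_lt this
      have hi0 : (0:ℝ) ≤ ((i:ℕ):ℝ) + 1 := by positivity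
      have hm0 : (0:ℝ) ≤ m2 := by positivity
      have t1 : (((i:ℕ):ℝ) + 1) * k * m2 ≤ (k:ℝ) * k * m2 :=
        mul_le_mul_of_nonneg_right
          (mul_le_mul_of_nonneg_right hik (by positivity)) hm0
      have t2 : (k:ℝ) * k * (m2:ℝ) ≤ (k:ℝ) * k * ((d:ℝ) / (100 * k^3)) := by
        apply mul_le_mul_of_nonneg_left hm2.le (by positivity)
      have t3 : (k:ℝ) * k * ((d:ℝ) / (100 * k^3)) = (d:ℝ) / (100 * k) := by
        field_simp
      have t4 : (d:ℝ) / (100 * k) ≤ (d:ℝ) / (10 * k) := by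
        apply div_le_div_of_nonneg_left hd0 (by positivity)
        nlinarith
      have hf0 : (0:ℝ) ≤ (d : ℝ) / (10 * k) - (((i:ℕ):ℝ) + 1) * k * m2 := by
        rw [t3] at t2; linarith
      refine ⟨hf0, ?_⟩
      have hcast : ((((i:ℕ) + 1) * k * m2 : ℕ) : ℝ) = (((i:ℕ):ℝ) + 1) * k * m2 := by
        push_cast; ring
      rcases le_total (((i:ℕ) + 1) * k * m2) D with h | h
      · rw [hB]
        simp only
        rw [Nat.cast_sub h, hcast, hD]
      · have hBz : B i = 0 := by rw [hB]; simp only; omega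
        rw [hBz]
        have : ((D:ℕ):ℝ) ≤ (((i:ℕ) + 1) * k * m2 : ℕ) := by exact_mod_cast h
        rw [hcast, hD] at this
        simp only [Nat.cast_zero]
        linarith
    have hprodle : ∏ i ∈ Finset.range k, ((d : ℝ) / (10 * k) - ((i:ℝ) + 1) * k * m2) ≤
        ∏ i : Fin k, ((B i : ℕ) : ℝ) := by
      rw [← Fin.prod_univ_eq_prod_range (fun i => (d : ℝ) / (10 * k) - ((i:ℝ) + 1) * k * m2) k]
      exact Finset.prod_le_prod (fun i _ => (hfB i).1) (fun i _ => (hfB i).2)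
    have hprod0 : (0:ℝ) ≤ ∏ i ∈ Finset.range k, ((d : ℝ) / (10 * k) - ((i:ℝ) + 1) * k * m2) := by
      rw [← Fin.prod_univ_eq_prod_range (fun i => (d : ℝ) / (10 * k) - ((i:ℝ) + 1) * k * m2) k]
      exact Finset.prod_nonneg (fun i _ => (hfB i).1)
    have hnd : (n:ℝ) * d / (2 * k) ≤ (n:ℝ) * d := by
      apply div_le_self (by positivity)
      nlinarith
    calc (n : ℝ) * d / (2 * k) * ∏ i ∈ Finset.range k, ((d : ℝ) / (10 * k) - ((i:ℝ) + 1) * k * m2)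
        ≤ (n:ℝ) * d * ∏ i ∈ Finset.range k, ((d : ℝ) / (10 * k) - ((i:ℝ) + 1) * k * m2) :=
          mul_le_mul_of_nonneg_right hnd hprod0
      _ ≤ (n:ℝ) * d * ∏ i : Fin k, ((B i : ℕ) : ℝ) := by
          apply mul_le_mul_of_nonneg_left hprodle (by positivity)
      _ = (n:ℝ) * (d:ℝ) * ∏ i : Fin k, ((B i : ℕ) : ℝ) := by ring
  have hNat : Nat.card {g : Finset (Fin n) × (Fin k → Fin n) × (Fin k → Finset (Fin n)) //
        g.1 ∈ H ∧ Function.Injective g.2.1 ∧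
        g.1 = Finset.image g.2.1 Finset.univ ∧
        (∀ i, g.2.2 i ∈ ℰ (g.2.1 i)) ∧
        (∀ i j, i ≠ j → Disjoint (g.2.2 i) (g.2.2 j)) ∧
        (∀ i, g.2.2 i ∩ g.1 = {g.2.1 i})} = (univ.filter pred).card := by
    rw [Nat.card_eq_fintype_card]
    exact Fintype.card_subtype pred
  rw [hNat]
  calc ((n : ℝ) * d / (2 * k)) * ∏ i ∈ Finset.range k, ((d : ℝ) / (10 * k) - (i + 1) * k * m2)
      ≤ ((n * d * ∏ i, B i : ℕ) : ℝ) := hreal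
    _ ≤ ((univ.filter pred).card : ℝ) := by exact_mod_cast hcount


/-- Counting flower gadgets: in a `k`-uniform hypergraph (`k` odd, `k ≥ 3`) on `n` vertices
with `n·d` edges, minimum degree at least `d/(10k)`, pairwise codegrees at most
`m₂ < d/(100k³)`, and fixed families `ℰ v` of exactly `d/(10k)` edges through each vertex,
the number of flower gadgets `(C, v, P)` with `Pᵢ ∈ ℰ(vᵢ)` is at least
`(nd/(2k))·∏_{i=1}^{k}(d/(10k) − i·k·m₂) ≥ n·d^{k+1}/(20k)^k`. -/
theorem stmt15 (n k d m2 : ℕ) (hk : Odd k) (hk3 : 3 ≤ k) (hdvd : 10 * k ∣ d)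
    (H : Finset (Finset (Fin n))) (hunif : ∀ E ∈ H, E.card = k)
    (hcard : H.card = n * d)
    (hmindeg : ∀ v : Fin n, d / (10 * k) ≤ (H.filter (fun E => v ∈ E)).card)
    (hcodeg : ∀ u w : Fin n, u ≠ w →
      (H.filter (fun E => u ∈ E ∧ w ∈ E)).card ≤ m2)
    (hm2 : (m2 : ℝ) < (d : ℝ) / (100 * k ^ 3))
    (ℰ : Fin n → Finset (Finset (Fin n)))
    (hℰ : ∀ v : Fin n, ℰ v ⊆ H.filter (fun E => v ∈ E))
    (hℰcard : ∀ v : Fin n, (ℰ v).card = d / (10 * k)) :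
    ((Nat.card {g : Finset (Fin n) × (Fin k → Fin n) × (Fin k → Finset (Fin n)) //
        g.1 ∈ H ∧ Function.Injective g.2.1 ∧
        g.1 = Finset.image g.2.1 Finset.univ ∧
        (∀ i, g.2.2 i ∈ ℰ (g.2.1 i)) ∧
        (∀ i j, i ≠ j → Disjoint (g.2.2 i) (g.2.2 j)) ∧
        (∀ i, g.2.2 i ∩ g.1 = {g.2.1 i})} : ℝ) ≥
      ((n : ℝ) * d / (2 * k)) *
        ∏ i ∈ Finset.range k, ((d : ℝ) / (10 * k) - (i + 1) * k * m2)) ∧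
    (((n : ℝ) * d / (2 * k)) *
        ∏ i ∈ Finset.range k, ((d : ℝ) / (10 * k) - (i + 1) * k * m2) ≥
      (n : ℝ) * (d : ℝ) ^ (k + 1) / (20 * k) ^ k) := by
  classical
  refine ⟨?_, second_ineq n k d m2 hk hk3 hm2⟩
  rcases Nat.eq_zero_or_pos n with hn | hn
  · subst hn
    rw [ge_iff_le]
    have h0 : ((0:ℕ) : ℝ) * (d:ℝ) / (2 * k) = 0 := by norm_num
    rw [h0, zero_mul]
    positivity
  · exact first_ineq n k d m2 hk3 hdvd hn H hunif hcard hcodeg hm2 ℰ hℰ hℰcard
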